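/- Let q be a positive integer, y > 0, x ∈ ℝ, N ≥ 1 and δ > 0. The number of pairs (ξ₁, ξ₂) of upper triangular matrices ξᵢ = ((aᵢ, bᵢ),(0, dᵢ)) with integer entries satisfying 0 < a₁d₁ = a₂d₂ < N and, for each i, (aᵢ−dᵢ)² + (bᵢ + 2x(aᵢ−dᵢ))²/y² < 4Nδ, is at most C_ε N^{1/2+ε} min(N^{1/2}, (Nδ)^{1/2}+1)(y²Nδ + 1) for every ε > 0. -/

import Mathlib

lemma two_pow_ge (k : ℕ) : (k + 1 : ℝ) ≤ 2 ^ k := by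
  exact_mod_cast Nat.lt_two_pow_self (n := k)

lemma prod_pf (n : ℕ) (hn : n ≠ 0) :
    ∏ p ∈ n.primeFactors, p ^ (n.factorization p) = n := by
  rw [← Nat.support_factorization]
  exact Nat.factorization_prod_pow_eq_self hn

lemma divisor_bound (e : ℝ) (he : 0 < e) :
    ∃ C ≥ 1, ∀ n : ℕ, n ≠ 0 → (n.divisors.card : ℝ) ≤ C * (n : ℝ) ^ e := by
  classical
  set r : ℝ := 2 ^ e with hr
  have hr1 : 1 < r := Real.one_lt_rpow_iff_of_pos (by norm_num) |>.2 (by norm_num [he])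
  set c : ℝ := (min 1 (r - 1))⁻¹ with hc
  have hmpos : 0 < min 1 (r - 1) := lt_min one_pos (by linarith)
  have hc1 : 1 ≤ c := by
    rw [hc]
    rw [le_inv_comm₀] <;> simp [hmpos, min_le_left]
  have hkey : ∀ k : ℕ, (k + 1 : ℝ) ≤ c * r ^ k := by
    intro k
    have h1 : 1 + (k : ℝ) * (r - 1) ≤ r ^ k := by
      have := one_add_mul_le_pow (a := r - 1) (by linarith) k
      simpa using this
    have h2 : min 1 (r - 1) * (k + 1 : ℝ) ≤ 1 + (k : ℝ) * (r - 1) := by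
      have t1 : min 1 (r - 1) ≤ 1 := min_le_left _ _
      have t2 : min 1 (r - 1) ≤ r - 1 := min_le_right _ _
      have : (0:ℝ) ≤ k := Nat.cast_nonneg k
      nlinarith
    rw [hc, ← div_le_iff₀' (by positivity)] at *
    rw [div_eq_inv_mul] at *
    calc (min 1 (r-1))⁻¹⁻¹ * (k+1:ℝ) = min 1 (r-1) * (k+1:ℝ) := by rw [inv_inv]
    _ ≤ 1 + (k:ℝ) * (r-1) := h2
    _ ≤ r ^ k := h1
  set P : ℕ := ⌈(2:ℝ) ^ e⁻¹⌉₊ with hP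
  refine ⟨c ^ P, one_le_pow₀ hc1, fun n hn => ?_⟩
  have hτ : (n.divisors.card : ℝ) = ∏ p ∈ n.primeFactors, ((n.factorization p : ℝ) + 1) := by
    rw [Nat.card_divisors hn]
    push_cast
    rfl
  have hne : (n : ℝ) ^ e = ∏ p ∈ n.primeFactors, ((p : ℝ) ^ (n.factorization p)) ^ e := by
    rw [Real.finset_prod_rpow _ _ (fun i _ => by positivity)]
    congr 1
    have := prod_pf n hn
    exact_mod_cast congrArg (Nat.cast : ℕ → ℝ) this.symm
  -- termwise bound
  have hterm : ∀ p ∈ n.primeFactors, ((n.factorization p : ℝ) + 1) ≤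
      (if (p:ℝ) < (2:ℝ) ^ e⁻¹ then c else 1) * ((p : ℝ) ^ (n.factorization p)) ^ e := by
    intro p hp
    have hp2 : 2 ≤ p := (Nat.prime_of_mem_primeFactors hp).two_le
    have hp0 : (0:ℝ) < p := by positivity
    set k := n.factorization p
    have hswap : ((p:ℝ) ^ k) ^ e = ((p:ℝ) ^ e) ^ k := by
      rw [← Real.rpow_natCast (p:ℝ) k, ← Real.rpow_mul hp0.le, mul_comm,
        Real.rpow_mul hp0.le, Real.rpow_natCast]
    rw [hswap]
    by_cases hcase : (p:ℝ) < (2:ℝ) ^ e⁻¹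
    · rw [if_pos hcase]
      have hpe : r ≤ (p:ℝ) ^ e := by
        rw [hr]
        exact Real.rpow_le_rpow (by norm_num) (by exact_mod_cast hp2) he.le
      calc ((k:ℝ) + 1) ≤ c * r ^ k := hkey k
      _ ≤ c * ((p:ℝ) ^ e) ^ k := by
          have := pow_le_pow_left₀ (by positivity : (0:ℝ) ≤ r) hpe k
          nlinarith [pow_nonneg (by positivity : (0:ℝ) ≤ r) k]
    · rw [if_neg hcase]
      push_neg at hcase
      have hpe : (2:ℝ) ≤ (p:ℝ) ^ e := by
        calc (2:ℝ) = ((2:ℝ) ^ e⁻¹) ^ e := by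
              rw [← Real.rpow_mul (by norm_num), inv_mul_cancel₀ he.ne', Real.rpow_one]
        _ ≤ (p:ℝ) ^ e := Real.rpow_le_rpow (by positivity) hcase he.le
      calc ((k:ℝ) + 1) ≤ 2 ^ k := two_pow_ge k
      _ ≤ ((p:ℝ) ^ e) ^ k := pow_le_pow_left₀ (by norm_num) hpe k
      _ = 1 * ((p:ℝ) ^ e) ^ k := (one_mul _).symm
  have hprod : (n.divisors.card : ℝ) ≤
      ∏ p ∈ n.primeFactors, ((if (p:ℝ) < (2:ℝ) ^ e⁻¹ then c else 1) *
        ((p : ℝ) ^ (n.factorization p)) ^ e) := by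
    rw [hτ]
    exact Finset.prod_le_prod (fun p _ => by positivity) hterm
  rw [Finset.prod_mul_distrib] at hprod
  have hif : ∏ p ∈ n.primeFactors, (if (p:ℝ) < (2:ℝ) ^ e⁻¹ then c else 1) ≤ c ^ P := by
    rw [Finset.prod_ite, Finset.prod_const, Finset.prod_const, one_pow, mul_one]
    apply pow_le_pow_right₀ hc1
    have hsub : Finset.filter (fun p : ℕ => (p:ℝ) < (2:ℝ) ^ e⁻¹) n.primeFactors ⊆ Finset.range P := by
      intro p hp
      rw [Finset.mem_filter] at hp
      rw [Finset.mem_range]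
      have h1 : (p:ℝ) < (P:ℝ) := lt_of_lt_of_le hp.2 (Nat.le_ceil _)
      exact_mod_cast h1
    calc _ ≤ (Finset.range P).card := Finset.card_le_card hsub
    _ = P := Finset.card_range P
  calc (n.divisors.card : ℝ) ≤ _ := hprod
  _ ≤ c ^ P * ∏ p ∈ n.primeFactors, ((p : ℝ) ^ (n.factorization p)) ^ e := by
      apply mul_le_mul_of_nonneg_right hif
      exact Finset.prod_nonneg fun p _ => by positivity
  _ = c ^ P * (n:ℝ) ^ e := by rw [← hne]

lemma card_Icc_real (u v : ℝ) (huv : u ≤ v) :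
    ((Finset.Icc ⌈u⌉ ⌊v⌋).card : ℝ) ≤ v - u + 1 := by
  rw [Int.card_Icc]
  rcases le_or_gt (⌊v⌋ + 1 - ⌈u⌉) 0 with h | h
  · rw [Int.toNat_of_nonpos h]
    push_cast
    linarith
  · have hc : ((⌊v⌋ + 1 - ⌈u⌉).toNat : ℤ) = ⌊v⌋ + 1 - ⌈u⌉ := Int.toNat_of_nonneg h.le
    have hc2 : (((⌊v⌋ + 1 - ⌈u⌉).toNat : ℕ) : ℝ) = ((⌊v⌋ : ℝ) + 1 - ⌈u⌉) := by
      exact_mod_cast congrArg (fun z : ℤ => (z : ℝ)) hc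
    rw [hc2]
    have h1 : (⌊v⌋ : ℝ) ≤ v := Int.floor_le v
    have h2 : u ≤ (⌈u⌉ : ℝ) := Int.le_ceil u
    linarith

lemma card_Icc_sym (w : ℝ) (hw : 0 ≤ w) :
    ((Finset.Icc (-⌊w⌋) ⌊w⌋).card : ℝ) ≤ 2 * w + 1 := by
  have := card_Icc_real (-w) w (by linarith)
  rw [Int.ceil_neg] at this
  linarith

set_option maxHeartbeats 1000000 in

/-- Second moment count for pairs of integral upper-triangular matrices
`ξᵢ = ((aᵢ,bᵢ),(0,dᵢ))`, encoded as triples `(aᵢ, bᵢ, dᵢ) ∈ ℤ³`. -/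
theorem stmt11 (ε : ℝ) (hε : 0 < ε) :
    ∃ C > 0, ∀ q : ℕ, 0 < q → ∀ x y N δ : ℝ, 0 < y → 1 ≤ N → 0 < δ →
      (Set.ncard {v : (ℤ × ℤ × ℤ) × (ℤ × ℤ × ℤ) |
          0 < v.1.1 * v.1.2.2 ∧ ((v.1.1 * v.1.2.2 : ℤ) : ℝ) < N ∧
          v.1.1 * v.1.2.2 = v.2.1 * v.2.2.2 ∧
          ((v.1.1 - v.1.2.2 : ℤ) : ℝ) ^ 2 +
              ((v.1.2.1 : ℝ) + 2 * x * ((v.1.1 - v.1.2.2 : ℤ) : ℝ)) ^ 2 / y ^ 2 < 4 * N * δ ∧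
          ((v.2.1 - v.2.2.2 : ℤ) : ℝ) ^ 2 +
              ((v.2.2.1 : ℝ) + 2 * x * ((v.2.1 - v.2.2.2 : ℤ) : ℝ)) ^ 2 / y ^ 2 < 4 * N * δ} : ℝ)
        ≤ C * N ^ ((1 : ℝ) / 2 + ε) * min (N ^ ((1 : ℝ) / 2)) ((N * δ) ^ ((1 : ℝ) / 2) + 1) *
            (y ^ 2 * N * δ + 1) := by
  classical
  obtain ⟨Cd, hCd1, hCd⟩ := divisor_bound (ε/2) (half_pos hε)
  have hCd0 : 0 < Cd := lt_of_lt_of_le one_pos hCd1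
  refine ⟨1800 * (Cd + 1)^2, by positivity, ?_⟩
  intro q hq x y N δ hy hN hδ
  have hN0 : (0:ℝ) < N := lt_of_lt_of_le one_pos hN
  have hNδ : 0 < N * δ := by positivity
  set T : ℝ := 2 * Real.sqrt (N * δ) with hTdef
  have hT0 : 0 ≤ T := by positivity
  have hT2 : T ^ 2 = 4 * (N * δ) := by
    rw [hTdef, mul_pow, Real.sq_sqrt hNδ.le]; ring
  set rN : ℝ := Real.sqrt N with hrNdef
  have hrN1 : 1 ≤ rN := by
    rw [hrNdef, show (1:ℝ) = Real.sqrt 1 from Real.sqrt_one.symm]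
    exact Real.sqrt_le_sqrt hN
  have hrN2 : rN ^ 2 = N := Real.sq_sqrt hN0.le
  set B : ℝ := 2 * T * y + 1 with hBdef
  have hB1 : 1 ≤ B := by nlinarith
  have hB0 : 0 ≤ B := by linarith
  set A : ℤ := ⌈N⌉ with hAdef
  have hAle : (A : ℝ) < N + 1 := Int.ceil_lt_add_one N
  have hNA : N ≤ (A : ℝ) := Int.le_ceil N
  set AD : ℤ → Finset (ℤ × ℤ) := fun n =>
    ((Finset.Icc (-A) A) ×ˢ (Finset.Icc (-A) A)).filter
      (fun p => p.1 * p.2 = n ∧ (((p.1 - p.2 : ℤ) : ℝ)) ^ 2 < 4 * N * δ) with hADdef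
  set bR : ℤ → Finset ℤ := fun t =>
    Finset.Icc ⌈-(2 * x * (t:ℝ)) - T * y⌉ ⌊-(2 * x * (t:ℝ)) + T * y⌋ with hbRdef
  set Tn : ℤ → Finset (ℤ × ℤ × ℤ) := fun n =>
    (AD n).biUnion (fun p => (bR (p.1 - p.2)).image (fun b => (p.1, b, p.2))) with hTndef
  set In : Finset ℤ := Finset.Ioo 0 A with hIndef
  set F : Finset ((ℤ×ℤ×ℤ)×(ℤ×ℤ×ℤ)) := In.biUnion (fun n => (Tn n) ×ˢ (Tn n)) with hFdef
  have hInR : ∀ n ∈ In, 0 < n ∧ (n : ℝ) ≤ N := by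
    intro n hn
    rw [hIndef, Finset.mem_Ioo] at hn
    refine ⟨hn.1, ?_⟩
    have : (n : ℝ) ≤ (A : ℝ) - 1 := by exact_mod_cast Int.le_sub_one_of_lt hn.2
    linarith
  -- membership of a triple satisfying the conditions
  have hmem : ∀ a b d : ℤ, 0 < a * d → ((a * d : ℤ) : ℝ) < N →
      ((a - d : ℤ) : ℝ) ^ 2 + ((b : ℝ) + 2 * x * ((a - d : ℤ) : ℝ)) ^ 2 / y ^ 2 < 4 * N * δ →
      (a, b, d) ∈ Tn (a * d) := by
    intro a b d hpos hlt hquad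
    have hy2 : (0:ℝ) < y ^ 2 := by positivity
    have hbnn : (0:ℝ) ≤ ((b : ℝ) + 2 * x * ((a - d : ℤ) : ℝ)) ^ 2 / y ^ 2 := by positivity
    have htlt : ((a - d : ℤ) : ℝ) ^ 2 < 4 * N * δ := by linarith
    have hb2 : ((b : ℝ) + 2 * x * ((a - d : ℤ) : ℝ)) ^ 2 < (T * y) ^ 2 := by
      have h1 : ((b : ℝ) + 2 * x * ((a - d : ℤ) : ℝ)) ^ 2 / y ^ 2 < 4 * N * δ := by
        nlinarith [sq_nonneg ((a - d : ℤ) : ℝ)]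
      have h2 := (div_lt_iff₀ hy2).1 h1
      calc _ < 4 * N * δ * y ^ 2 := h2
      _ = (T * y) ^ 2 := by rw [mul_pow, hT2]; ring
    have h3 := abs_lt_of_sq_lt_sq' hb2 (by positivity)
    have ha0 : a ≠ 0 := by rintro rfl; simp at hpos
    have hd0 : d ≠ 0 := by rintro rfl; simp at hpos
    have hadA : a * d ≤ A := by
      have : ((a * d : ℤ) : ℝ) ≤ (A : ℝ) := le_trans hlt.le hNA
      exact_mod_cast this
    have haA : -A ≤ a ∧ a ≤ A := by
      have h1 : |a| ≤ |a * d| := by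
        rw [abs_mul]
        nlinarith [abs_nonneg a, Int.one_le_abs hd0, Int.one_le_abs ha0]
      have h2 : |a * d| = a * d := abs_of_pos hpos
      constructor
      · linarith [neg_abs_le a]
      · linarith [le_abs_self a]
    have hdA : -A ≤ d ∧ d ≤ A := by
      have h1 : |d| ≤ |a * d| := by
        rw [abs_mul]
        nlinarith [abs_nonneg d, Int.one_le_abs hd0, Int.one_le_abs ha0]
      have h2 : |a * d| = a * d := abs_of_pos hpos
      constructor
      · linarith [neg_abs_le d]
      · linarith [le_abs_self d]
    have hADmem : (a, d) ∈ AD (a * d) := by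
      simp only [hADdef, Finset.mem_filter, Finset.mem_product, Finset.mem_Icc]
      refine ⟨⟨⟨haA.1, haA.2⟩, ⟨hdA.1, hdA.2⟩⟩, ?_, htlt⟩
      trivial
    have hbmem : b ∈ bR (a - d) := by
      simp only [hbRdef, Finset.mem_Icc]
      constructor
      · apply Int.ceil_le.2
        push_cast
        push_cast at h3
        linarith [h3.1]
      · apply Int.le_floor.2
        push_cast
        push_cast at h3
        linarith [h3.2]
    simp only [hTndef]
    exact Finset.mem_biUnion.2 ⟨(a,d), hADmem, Finset.mem_image.2 ⟨b, hbmem, rfl⟩⟩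
  -- the set is contained in F
  have hsub : {v : (ℤ × ℤ × ℤ) × (ℤ × ℤ × ℤ) |
          0 < v.1.1 * v.1.2.2 ∧ ((v.1.1 * v.1.2.2 : ℤ) : ℝ) < N ∧
          v.1.1 * v.1.2.2 = v.2.1 * v.2.2.2 ∧
          ((v.1.1 - v.1.2.2 : ℤ) : ℝ) ^ 2 +
              ((v.1.2.1 : ℝ) + 2 * x * ((v.1.1 - v.1.2.2 : ℤ) : ℝ)) ^ 2 / y ^ 2 < 4 * N * δ ∧
          ((v.2.1 - v.2.2.2 : ℤ) : ℝ) ^ 2 +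
              ((v.2.2.1 : ℝ) + 2 * x * ((v.2.1 - v.2.2.2 : ℤ) : ℝ)) ^ 2 / y ^ 2 < 4 * N * δ}
      ⊆ (F : Set _) := by
    rintro ⟨⟨a1, b1, d1⟩, ⟨a2, b2, d2⟩⟩ ⟨h1, h2, h3, h4, h5⟩
    simp only [] at h1 h2 h3 h4 h5
    have hIn : a1 * d1 ∈ In := by
      rw [hIndef, Finset.mem_Ioo]
      refine ⟨h1, ?_⟩
      have : ((a1 * d1 : ℤ) : ℝ) < (A : ℝ) := lt_of_lt_of_le h2 hNA
      exact_mod_cast this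
    have hm1 : (a1, b1, d1) ∈ Tn (a1 * d1) := hmem a1 b1 d1 h1 h2 h4
    have hm2 : (a2, b2, d2) ∈ Tn (a1 * d1) := by
      rw [h3]
      exact hmem a2 b2 d2 (h3 ▸ h1) (h3 ▸ h2) h5
    simp only [hFdef, Finset.coe_biUnion, Set.mem_iUnion, Finset.mem_coe]
    exact ⟨a1 * d1, hIn, Finset.mem_product.2 ⟨hm1, hm2⟩⟩
  
  -- card of bR
  have hbRcard : ∀ t : ℤ, ((bR t).card : ℝ) ≤ B := by
    intro t
    have h0 := card_Icc_real (-(2 * x * (t:ℝ)) - T * y) (-(2 * x * (t:ℝ)) + T * y)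
      (by nlinarith [mul_nonneg hT0 hy.le])
    simp only [hbRdef]
    calc ((Finset.Icc ⌈-(2 * x * (t:ℝ)) - T * y⌉ ⌊-(2 * x * (t:ℝ)) + T * y⌋).card : ℝ)
        ≤ (-(2 * x * (t:ℝ)) + T * y) - (-(2 * x * (t:ℝ)) - T * y) + 1 := h0
    _ = B := by rw [hBdef]; ring
  -- card of Tn
  have hTncard : ∀ n, ((Tn n).card : ℝ) ≤ ((AD n).card : ℝ) * B := by
    intro n
    have h1 : (Tn n).card ≤ ∑ p ∈ AD n, ((bR (p.1 - p.2)).image (fun b => (p.1, b, p.2))).card := by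
      simp only [hTndef]
      exact Finset.card_biUnion_le
    calc ((Tn n).card : ℝ)
        ≤ ((∑ p ∈ AD n, ((bR (p.1 - p.2)).image (fun b => (p.1, b, p.2))).card : ℕ) : ℝ) := by
          exact_mod_cast h1
    _ = ∑ p ∈ AD n, (((bR (p.1 - p.2)).image (fun b => (p.1, b, p.2))).card : ℝ) := by
        push_cast; rfl
    _ ≤ ∑ p ∈ AD n, B := by
        refine Finset.sum_le_sum fun p _ => ?_
        calc (((bR (p.1 - p.2)).image (fun b => (p.1, b, p.2))).card : ℝ)
            ≤ ((bR (p.1 - p.2)).card : ℝ) := by exact_mod_cast Finset.card_image_le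
        _ ≤ B := hbRcard _
    _ = ((AD n).card : ℝ) * B := by rw [Finset.sum_const, nsmul_eq_mul]
  -- product structure of AD
  have hmul : ∀ n : ℤ, ∀ p : ℤ × ℤ, p ∈ AD n →
      p.1 * p.2 = n ∧ (((p.1 - p.2 : ℤ) : ℝ)) ^ 2 < 4 * N * δ := by
    intro n p hp
    simp only [hADdef, Finset.mem_filter] at hp
    exact hp.2
  -- divisor bound for AD
  have hADdiv : ∀ n ∈ In, ((AD n).card : ℝ) ≤ 2 * (Cd * N ^ (ε/2)) := by
    intro n hn
    obtain ⟨hn0, hnN⟩ := hInR n hn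
    have hnt : n.toNat ≠ 0 := by omega
    have hc1 : ((AD n).filter (fun p => 0 < p.1)).card ≤ n.toNat.divisors.card := by
      apply Finset.card_le_card_of_injOn (fun p => p.1.toNat)
      · intro p hp
        rw [Finset.mem_coe, Finset.mem_filter] at hp
        obtain ⟨hpAD, hppos⟩ := hp
        have hprod := (hmul n p hpAD).1
        have hp2pos : 0 < p.2 := by nlinarith [hprod, hn0]
        rw [Finset.mem_coe, Nat.mem_divisors]
        refine ⟨⟨p.2.toNat, ?_⟩, hnt⟩
        have : ((n.toNat : ℤ)) = ((p.1.toNat * p.2.toNat : ℕ) : ℤ) := by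
          push_cast
          rw [Int.toNat_of_nonneg hn0.le, Int.toNat_of_nonneg hppos.le,
            Int.toNat_of_nonneg hp2pos.le]
          exact hprod.symm
        exact_mod_cast this
      · intro p hp p' hp' heq
        simp only [Finset.mem_coe, Finset.mem_filter] at hp hp'
        have h1 : p.1 = p'.1 := by
          have := congrArg (fun m : ℕ => (m : ℤ)) heq
          simpa [Int.toNat_of_nonneg hp.2.le, Int.toNat_of_nonneg hp'.2.le] using this
        have h2 : p.2 = p'.2 := by
          have e1 := (hmul n p hp.1).1
          have e2 := (hmul n p' hp'.1).1
          rw [← h1] at e2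
          exact mul_left_cancel₀ (by omega) (e1.trans e2.symm)
        exact Prod.ext h1 h2
    have hc2 : ((AD n).filter (fun p => ¬ 0 < p.1)).card ≤ n.toNat.divisors.card := by
      apply Finset.card_le_card_of_injOn (fun p => (-p.1).toNat)
      · intro p hp
        rw [Finset.mem_coe, Finset.mem_filter] at hp
        obtain ⟨hpAD, hpneg⟩ := hp
        have hprod := (hmul n p hpAD).1
        push_neg at hpneg
        have hp1 : p.1 < 0 := by
          rcases lt_or_eq_of_le hpneg with h | h
          · exact h
          · exfalso; rw [h] at hprod; simp at hprod; omega
        have hp2neg : p.2 < 0 := by nlinarith [hprod, hn0]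
        rw [Finset.mem_coe, Nat.mem_divisors]
        refine ⟨⟨(-p.2).toNat, ?_⟩, hnt⟩
        have : ((n.toNat : ℤ)) = (((-p.1).toNat * (-p.2).toNat : ℕ) : ℤ) := by
          push_cast
          rw [Int.toNat_of_nonneg hn0.le, Int.toNat_of_nonneg (by omega : (0:ℤ) ≤ -p.1),
            Int.toNat_of_nonneg (by omega : (0:ℤ) ≤ -p.2)]
          rw [← hprod]; ring
        exact_mod_cast this
      · intro p hp p' hp' heq
        simp only [Finset.mem_coe, Finset.mem_filter] at hp hp'
        have hp1 : p.1 < 0 := by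
          have hthis := (hmul n p hp.1).1
          have h2 := hp.2; push_neg at h2
          rcases lt_or_eq_of_le h2 with h | h
          · exact h
          · exfalso; rw [h] at hthis; simp at hthis; omega
        have hp1' : p'.1 < 0 := by
          have hthis := (hmul n p' hp'.1).1
          have h2 := hp'.2; push_neg at h2
          rcases lt_or_eq_of_le h2 with h | h
          · exact h
          · exfalso; rw [h] at hthis; simp at hthis; omega
        have h1 : p.1 = p'.1 := by
          have := congrArg (fun m : ℕ => (m : ℤ)) heq
          simp only [Int.toNat_of_nonneg (by omega : (0:ℤ) ≤ -p.1),
            Int.toNat_of_nonneg (by omega : (0:ℤ) ≤ -p'.1)] at this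
          omega
        have h2 : p.2 = p'.2 := by
          have e1 := (hmul n p hp.1).1
          have e2 := (hmul n p' hp'.1).1
          rw [← h1] at e2
          exact mul_left_cancel₀ (by omega) (e1.trans e2.symm)
        exact Prod.ext h1 h2
    have hsplit := Finset.card_filter_add_card_filter_not
      (s := AD n) (p := fun p : ℤ × ℤ => 0 < p.1)
    have hdiv : (n.toNat.divisors.card : ℝ) ≤ Cd * N ^ (ε/2) := by
      calc (n.toNat.divisors.card : ℝ) ≤ Cd * (n.toNat : ℝ) ^ (ε/2) := hCd _ hnt
      _ ≤ Cd * N ^ (ε/2) := by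
          apply mul_le_mul_of_nonneg_left _ (by linarith)
          apply Real.rpow_le_rpow (Nat.cast_nonneg _) _ (by linarith)
          have : ((n.toNat : ℤ) : ℝ) = (n : ℝ) := by rw [Int.toNat_of_nonneg hn0.le]
          push_cast at this
          linarith
    calc ((AD n).card : ℝ)
        = (((AD n).filter (fun p => 0 < p.1)).card : ℝ)
          + (((AD n).filter (fun p => ¬ 0 < p.1)).card : ℝ) := by exact_mod_cast hsplit.symm
    _ ≤ (n.toNat.divisors.card : ℝ) + (n.toNat.divisors.card : ℝ) :=
        add_le_add (by exact_mod_cast hc1) (by exact_mod_cast hc2)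
    _ ≤ 2 * (Cd * N ^ (ε/2)) := by linarith
  -- global sum bound via lattice points
  have hsum_glob : (∑ n ∈ In, ((AD n).card : ℝ)) ≤ (2 * T + 1) * (2 * (T + rN) + 1) := by
    have hdisj : ∀ n ∈ In, ∀ m ∈ In, n ≠ m → Disjoint (AD n) (AD m) := by
      intro n _ m _ hnm
      rw [Finset.disjoint_left]
      intro p hp hp'
      exact hnm ((((hmul n p hp).1).symm).trans (hmul m p hp').1)
    have hcup : ∑ n ∈ In, (AD n).card = (In.biUnion AD).card := (Finset.card_biUnion hdisj).symm
    have hinj : (In.biUnion AD).card ≤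
        ((Finset.Icc (-⌊T⌋) ⌊T⌋) ×ˢ (Finset.Icc (-⌊T + rN⌋) ⌊T + rN⌋)).card := by
      apply Finset.card_le_card_of_injOn (fun p => (p.1 - p.2, p.1))
      · intro p hp
        rw [Finset.mem_coe, Finset.mem_biUnion] at hp
        obtain ⟨n, hnIn, hpAD⟩ := hp
        obtain ⟨hprod, hsq⟩ := hmul n p hpAD
        obtain ⟨hn0, hnN⟩ := hInR n hnIn
        have htabs : |((p.1 - p.2 : ℤ) : ℝ)| ≤ T := by
          apply le_of_lt
          apply abs_lt_of_sq_lt_sq _ hT0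
          rw [hT2]; linarith
        have ht1 : p.1 - p.2 ≤ ⌊T⌋ := Int.le_floor.2 (by
          have := le_abs_self ((p.1 - p.2 : ℤ) : ℝ); linarith)
        have ht2 : -⌊T⌋ ≤ p.1 - p.2 := by
          rw [neg_le]
          apply Int.le_floor.2
          have := neg_abs_le ((p.1 - p.2 : ℤ) : ℝ)
          push_cast
          push_cast at this htabs
          linarith
        have hprodR : (p.1 : ℝ) * (p.2 : ℝ) = (n : ℝ) := by exact_mod_cast hprod
        have e1 : (p.1 : ℝ) ^ 2 = (n : ℝ) + (p.1 : ℝ) * ((p.1 : ℝ) - (p.2 : ℝ)) := by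
          linear_combination hprodR
        have e2 : (p.1 : ℝ) ^ 2 ≤ N + T * |(p.1 : ℝ)| := by
          have h4 : (p.1 : ℝ) * ((p.1 : ℝ) - (p.2 : ℝ)) ≤ |(p.1 : ℝ)| * T := by
            calc (p.1 : ℝ) * ((p.1 : ℝ) - (p.2 : ℝ)) ≤ |(p.1 : ℝ) * ((p.1 : ℝ) - (p.2 : ℝ))| :=
                le_abs_self _
            _ = |(p.1 : ℝ)| * |((p.1 : ℝ) - (p.2 : ℝ))| := abs_mul _ _
            _ ≤ |(p.1 : ℝ)| * T := by
                apply mul_le_mul_of_nonneg_left _ (abs_nonneg _)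
                push_cast at htabs
                exact htabs
          nlinarith
        have e3 : |(p.1 : ℝ)| ≤ T + rN := by
          by_contra hcon
          push_neg at hcon
          have hapos : 0 < |(p.1 : ℝ)| := by linarith
          have k1 : (T + rN) * |(p.1 : ℝ)| < |(p.1 : ℝ)| * |(p.1 : ℝ)| :=
            mul_lt_mul_of_pos_right hcon hapos
          have k2 : rN * (T + rN) ≤ rN * |(p.1 : ℝ)| :=
            mul_le_mul_of_nonneg_left hcon.le (by linarith)
          have k3 : 0 ≤ rN * T := mul_nonneg (by linarith) hT0
          nlinarith [sq_abs ((p.1 : ℝ))]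
        have ha1 : p.1 ≤ ⌊T + rN⌋ := Int.le_floor.2 (by
          have := le_abs_self ((p.1 : ℤ) : ℝ); linarith)
        have ha2 : -⌊T + rN⌋ ≤ p.1 := by
          rw [neg_le]
          apply Int.le_floor.2
          have := neg_abs_le ((p.1 : ℤ) : ℝ)
          push_cast
          push_cast at this e3
          linarith
        rw [Finset.mem_coe, Finset.mem_product]
        exact ⟨Finset.mem_Icc.2 ⟨ht2, ht1⟩, Finset.mem_Icc.2 ⟨ha2, ha1⟩⟩
      · intro p hp p' hp' heq
        simp only [Prod.mk.injEq] at heq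
        have h1 : p.1 = p'.1 := heq.2
        have h2 : p.2 = p'.2 := by omega
        exact Prod.ext h1 h2
    calc (∑ n ∈ In, ((AD n).card : ℝ))
        = ((∑ n ∈ In, (AD n).card : ℕ) : ℝ) := by push_cast; rfl
    _ ≤ (((Finset.Icc (-⌊T⌋) ⌊T⌋) ×ˢ (Finset.Icc (-⌊T + rN⌋) ⌊T + rN⌋)).card : ℝ) := by
        rw [hcup] at *
        exact_mod_cast hinj
    _ = ((Finset.Icc (-⌊T⌋) ⌊T⌋).card : ℝ) * ((Finset.Icc (-⌊T + rN⌋) ⌊T + rN⌋).card : ℝ) := by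
        rw [Finset.card_product]; push_cast; rfl
    _ ≤ (2 * T + 1) * (2 * (T + rN) + 1) :=
        mul_le_mul (card_Icc_sym T hT0) (card_Icc_sym (T + rN) (by linarith))
          (Nat.cast_nonneg _) (by linarith)
  -- global sum bound via divisor bound
  have hInCard : ((In.card : ℕ) : ℝ) ≤ N := by
    have hcard : In.card = (A - 0 - 1).toNat := by rw [hIndef, Int.card_Ioo]
    rw [hcard]
    rcases le_or_gt (A - 0 - 1) 0 with h | h
    · rw [Int.toNat_of_nonpos h]; simpa using hN0.le
    · have hc2 : (((A - 0 - 1).toNat : ℕ) : ℝ) = ((A : ℝ) - 0 - 1) := by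
        exact_mod_cast congrArg (fun z : ℤ => (z : ℝ)) (Int.toNat_of_nonneg h.le)
      rw [hc2]; linarith
  have hsum_glob2 : (∑ n ∈ In, ((AD n).card : ℝ)) ≤ 2 * (Cd * N ^ (ε/2)) * N := by
    calc (∑ n ∈ In, ((AD n).card : ℝ)) ≤ ∑ _n ∈ In, 2 * (Cd * N ^ (ε/2)) :=
        Finset.sum_le_sum (fun n hn => hADdiv n hn)
    _ = In.card * (2 * (Cd * N ^ (ε/2))) := by rw [Finset.sum_const, nsmul_eq_mul]
    _ ≤ N * (2 * (Cd * N ^ (ε/2))) := mul_le_mul_of_nonneg_right hInCard (by positivity)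
    _ = 2 * (Cd * N ^ (ε/2)) * N := by ring
  -- master inequality
  have hncard := Set.ncard_le_ncard hsub F.finite_toSet
  rw [Set.ncard_coe_finset] at hncard
  have hFsum : (F.card : ℝ) ≤ ∑ n ∈ In, ((Tn n).card : ℝ) * ((Tn n).card : ℝ) := by
    have h1 : F.card ≤ ∑ n ∈ In, ((Tn n) ×ˢ (Tn n)).card := by
      rw [hFdef]
      exact Finset.card_biUnion_le
    calc (F.card : ℝ) ≤ ((∑ n ∈ In, ((Tn n) ×ˢ (Tn n)).card : ℕ) : ℝ) := by exact_mod_cast h1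
    _ = ∑ n ∈ In, ((Tn n).card : ℝ) * ((Tn n).card : ℝ) := by
        push_cast [Finset.card_product]; rfl
  have hchain : (F.card : ℝ) ≤
      2 * (Cd * N ^ (ε/2)) * B * B * (∑ n ∈ In, ((AD n).card : ℝ)) := by
    calc (F.card : ℝ) ≤ ∑ n ∈ In, ((Tn n).card : ℝ) * ((Tn n).card : ℝ) := hFsum
    _ ≤ ∑ n ∈ In, (2 * (Cd * N ^ (ε/2)) * B) * (((AD n).card : ℝ) * B) := by
        refine Finset.sum_le_sum (fun n hn => ?_)
        have h1 := hTncard n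
        have h2 := hADdiv n hn
        have h3 : ((Tn n).card : ℝ) ≤ 2 * (Cd * N ^ (ε/2)) * B :=
          le_trans h1 (mul_le_mul_of_nonneg_right h2 hB0)
        exact mul_le_mul h3 h1 (Nat.cast_nonneg _) (by positivity)
    _ = 2 * (Cd * N ^ (ε/2)) * B * B * (∑ n ∈ In, ((AD n).card : ℝ)) := by
        rw [Finset.sum_congr rfl (fun n _ => by ring :
          ∀ n ∈ In, (2 * (Cd * N ^ (ε/2)) * B) * (((AD n).card : ℝ) * B)
            = (2 * (Cd * N ^ (ε/2)) * B * B) * ((AD n).card : ℝ)), ← Finset.mul_sum]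
  -- abbreviations for the final computation
  have hrpow_half : N ^ ((1:ℝ)/2) = rN := by rw [hrNdef, Real.sqrt_eq_rpow]
  have hsd_half : (N * δ) ^ ((1:ℝ)/2) = T / 2 := by
    rw [← Real.sqrt_eq_rpow, hTdef]; ring
  have hBB : B * B ≤ 32 * (y ^ 2 * N * δ + 1) := by
    have hT2y : T ^ 2 * y ^ 2 = 4 * (N * δ) * y ^ 2 := by rw [hT2]
    rw [hBdef]
    nlinarith [sq_nonneg (2 * T * y - 1)]
  have hY0 : (0:ℝ) ≤ y ^ 2 * N * δ + 1 := by positivity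
  have hNe0 : (0:ℝ) ≤ N ^ (ε/2) := Real.rpow_nonneg hN0.le _
  have hstart : (Set.ncard {v : (ℤ × ℤ × ℤ) × (ℤ × ℤ × ℤ) |
          0 < v.1.1 * v.1.2.2 ∧ ((v.1.1 * v.1.2.2 : ℤ) : ℝ) < N ∧
          v.1.1 * v.1.2.2 = v.2.1 * v.2.2.2 ∧
          ((v.1.1 - v.1.2.2 : ℤ) : ℝ) ^ 2 +
              ((v.1.2.1 : ℝ) + 2 * x * ((v.1.1 - v.1.2.2 : ℤ) : ℝ)) ^ 2 / y ^ 2 < 4 * N * δ ∧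
          ((v.2.1 - v.2.2.2 : ℤ) : ℝ) ^ 2 +
              ((v.2.2.1 : ℝ) + 2 * x * ((v.2.1 - v.2.2.2 : ℤ) : ℝ)) ^ 2 / y ^ 2 < 4 * N * δ} : ℝ)
      ≤ 2 * (Cd * N ^ (ε/2)) * B * B * (∑ n ∈ In, ((AD n).card : ℝ)) :=
    le_trans (by exact_mod_cast hncard) hchain
  refine le_trans hstart ?_
  rcases le_total (N ^ ((1:ℝ)/2)) ((N * δ) ^ ((1:ℝ)/2) + 1) with hmin | hmin
  · rw [min_eq_left hmin]
    have h1 : N ^ ((1:ℝ)/2 + ε) * N ^ ((1:ℝ)/2) = N ^ (1 + ε) := by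
      rw [← Real.rpow_add hN0, show (1:ℝ)/2 + ε + (1:ℝ)/2 = 1 + ε by ring]
    have h2 : N ^ (ε/2) * N ^ (ε/2) * N = N ^ (1 + ε) := by
      rw [← Real.rpow_add hN0, show ε/2 + ε/2 = ε by ring, show (1:ℝ) + ε = ε + 1 by ring,
        Real.rpow_add_one hN0.ne' ε]
    have hconst : 128 * (Cd * Cd) ≤ 1800 * (Cd + 1)^2 := by nlinarith
    calc 2 * (Cd * N ^ (ε/2)) * B * B * (∑ n ∈ In, ((AD n).card : ℝ))
        ≤ 2 * (Cd * N ^ (ε/2)) * B * B * (2 * (Cd * N ^ (ε/2)) * N) := by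
          apply mul_le_mul_of_nonneg_left hsum_glob2 (by positivity)
    _ = 4 * (Cd * Cd) * (N ^ (ε/2) * N ^ (ε/2) * N) * (B * B) := by ring
    _ ≤ 4 * (Cd * Cd) * (N ^ (ε/2) * N ^ (ε/2) * N) * (32 * (y ^ 2 * N * δ + 1)) := by
        apply mul_le_mul_of_nonneg_left hBB
        positivity
    _ = 128 * (Cd * Cd) * (N ^ (1 + ε) * (y ^ 2 * N * δ + 1)) := by rw [h2]; ring
    _ ≤ 1800 * (Cd + 1)^2 * (N ^ (1 + ε) * (y ^ 2 * N * δ + 1)) := by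
        apply mul_le_mul_of_nonneg_right hconst
        positivity
    _ = 1800 * (Cd + 1)^2 * N ^ ((1:ℝ)/2 + ε) * N ^ ((1:ℝ)/2) * (y ^ 2 * N * δ + 1) := by
        rw [show 1800 * (Cd + 1)^2 * N ^ ((1:ℝ)/2 + ε) * N ^ ((1:ℝ)/2) * (y ^ 2 * N * δ + 1)
            = 1800 * (Cd + 1)^2 * (N ^ ((1:ℝ)/2 + ε) * N ^ ((1:ℝ)/2)) * (y ^ 2 * N * δ + 1) by ring,
          h1]
        ring
  · rw [min_eq_right hmin, hsd_half]
    rw [hrpow_half, hsd_half] at hmin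
    have a1 : 2 * T + 1 ≤ 4 * (T/2 + 1) := by linarith
    have a2 : 2 * (T + rN) + 1 ≤ 6 * rN := by linarith
    have hprodb : (2 * T + 1) * (2 * (T + rN) + 1) ≤ 24 * ((T/2 + 1) * rN) := by
      calc (2 * T + 1) * (2 * (T + rN) + 1) ≤ (4 * (T/2 + 1)) * (6 * rN) :=
          mul_le_mul a1 a2 (by linarith) (by linarith)
      _ = 24 * ((T/2 + 1) * rN) := by ring
    have hNr : N ^ (ε/2) * rN ≤ N ^ ((1:ℝ)/2 + ε) := by
      rw [← hrpow_half, ← Real.rpow_add hN0]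
      exact Real.rpow_le_rpow_of_exponent_le hN (by linarith)
    have hconst : 1536 * Cd ≤ 1800 * (Cd + 1)^2 := by nlinarith
    calc 2 * (Cd * N ^ (ε/2)) * B * B * (∑ n ∈ In, ((AD n).card : ℝ))
        ≤ 2 * (Cd * N ^ (ε/2)) * B * B * ((2 * T + 1) * (2 * (T + rN) + 1)) := by
          apply mul_le_mul_of_nonneg_left hsum_glob (by positivity)
    _ ≤ 2 * (Cd * N ^ (ε/2)) * B * B * (24 * ((T/2 + 1) * rN)) := by
        apply mul_le_mul_of_nonneg_left hprodb (by positivity)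
    _ = 48 * Cd * (N ^ (ε/2) * rN) * (T/2 + 1) * (B * B) := by ring
    _ ≤ 48 * Cd * (N ^ ((1:ℝ)/2 + ε)) * (T/2 + 1) * (32 * (y ^ 2 * N * δ + 1)) := by
        have hTp : (0:ℝ) ≤ T/2 + 1 := by linarith
        have hh1 : 48 * Cd * (N ^ (ε/2) * rN) * (T/2 + 1)
            ≤ 48 * Cd * (N ^ ((1:ℝ)/2 + ε)) * (T/2 + 1) :=
          mul_le_mul_of_nonneg_right (mul_le_mul_of_nonneg_left hNr (by positivity)) hTp
        exact mul_le_mul hh1 hBB (mul_nonneg hB0 hB0)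
          (mul_nonneg (by positivity) hTp)
    _ = 1536 * Cd * (N ^ ((1:ℝ)/2 + ε) * ((T/2 + 1) * (y ^ 2 * N * δ + 1))) := by ring
    _ ≤ 1800 * (Cd + 1)^2 * (N ^ ((1:ℝ)/2 + ε) * ((T/2 + 1) * (y ^ 2 * N * δ + 1))) := by
        apply mul_le_mul_of_nonneg_right hconst
        have hTp : (0:ℝ) ≤ T/2 + 1 := by linarith
        exact mul_nonneg (by positivity) (mul_nonneg hTp hY0)
    _ = 1800 * (Cd + 1)^2 * N ^ ((1:ℝ)/2 + ε) * (T/2 + 1) * (y ^ 2 * N * δ + 1) := by ring
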